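/- arXiv:1504.01172 — 2 statements merged into one kernel-verified Lean document; each statement's English description precedes it below -/
import Mathlib

section
/- Let q be a prime power and t ≥ 2 an integer. Then N_t(q) = (φ(t)/t)·(q−1) if rad₄(t) divides q−1, and N_t(q) = 0 otherwise. -/
open Polynomial Finset

/-- The radical of `n`: the largest squarefree divisor of `n`. -/
def rad (n : ℕ) : ℕ := ∏ p ∈ n.primeFactors, p

/-- `rad₄ t = rad t` if `4 ∤ t` and `2 * rad t` otherwise. -/
def rad4 (n : ℕ) : ℕ := if 4 ∣ n then 2 * rad n else rad n

/-- `Nt t q` is the number of elements `a` of the finite field of `q` elements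
(for `q` a prime power) such that the binomial `X ^ t - a` is irreducible;
it is `0` if `q` is not a prime power. -/
noncomputable def Nt (t q : ℕ) : ℕ :=
  if h : IsPrimePow q then
    haveI : Fact q.minFac.Prime := ⟨Nat.minFac_prime h.ne_one⟩
    Nat.card {a : GaloisField q.minFac (q.factorization q.minFac) //
      Irreducible (X ^ t - C a)}
  else 0

universe u

theorem aux_irred {K : Type u} [Field K] {t : ℕ} (ht : t ≠ 0) {a : K}
    (ha : ∀ p : ℕ, p.Prime → p ∣ t → ∀ b : K, b ^ p ≠ a)
    (h4 : 4 ∣ t → ∃ i : K, i * i = -1) :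
    Irreducible (X ^ t - C a) := by
  induction t using induction_on_primes generalizing K a with
  | zero => exact absurd rfl ht
  | one => simpa using irreducible_X_sub_C a
  | prime_mul p n hp IH =>
    have hn0 : n ≠ 0 := by rintro rfl; simp at ht
    rw [mul_comm]
    apply X_pow_mul_sub_C_irreducible
      (X_pow_sub_C_irreducible_of_prime hp (ha p hp (dvd_mul_right _ _)))
    intro E _ _ x hx
    have hxi : IsIntegral K x := not_not.mp fun h ↦ by
      simpa only [degree_zero, degree_X_pow_sub_C hp.pos,
        WithBot.natCast_ne_bot] using congr_arg degree (hx.symm.trans (dif_neg h))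
    have hkey : Algebra.norm K (IntermediateField.AdjoinSimple.gen K x)
        = (-1) ^ p * -a := by
      rw [← IntermediateField.adjoin.powerBasis_gen hxi,
        Algebra.PowerBasis.norm_gen_eq_coeff_zero_minpoly]
      simp [IntermediateField.minpoly_gen, hx, hp.ne_zero.symm, coeff_X_pow,
        natDegree_X_pow_sub_C]
    apply IH hn0
    · intro r hr hrn b hb
      have hnb : (Algebra.norm K b) ^ r = (-1) ^ p * -a := by
        rw [← map_pow, hb, hkey]
      rcases eq_or_ne p 2 with hp2 | hp2
      · subst hp2
        rw [show ((-1 : K)) ^ 2 * -a = -a by ring] at hnb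
        rcases eq_or_ne r 2 with hr2 | hr2
        · subst hr2
          obtain ⟨i, hi⟩ := h4 (by obtain ⟨m, rfl⟩ := hrn; exact ⟨m, by ring⟩)
          exact ha 2 hp (dvd_mul_right _ _) (i * Algebra.norm K b)
            (by have h' : (i * Algebra.norm K b) ^ 2
                    = (i * i) * (Algebra.norm K b) ^ 2 := by ring
                rw [h', hi, hnb]; ring)
        · have hrodd : Odd r := hr.odd_of_ne_two hr2
          exact ha r hr (Dvd.dvd.mul_left hrn 2) (-(Algebra.norm K b))
            (by rw [hrodd.neg_pow, hnb, neg_neg])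
      · have hpodd : Odd p := hp.odd_of_ne_two hp2
        rw [hpodd.neg_one_pow, neg_one_mul, neg_neg] at hnb
        exact ha r hr (Dvd.dvd.mul_left hrn p) (Algebra.norm K b) hnb
    · intro h4n
      obtain ⟨i, hi⟩ := h4 (Dvd.dvd.mul_left h4n p)
      exact ⟨algebraMap K _ i, by rw [← map_mul, hi, map_neg, map_one]⟩

theorem aux_fact {F : Type} [Field F] [Fintype F] {t : ℕ} (ht : 2 ≤ t) {a : F}
    (H : Irreducible (X ^ t - C a)) (h4t : 4 ∣ t) : 4 ∣ Fintype.card F - 1 := by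
  classical
  by_contra h4q
  set q := Fintype.card F with hq
  have hq2 : 2 ≤ q := Fintype.one_lt_card
  have h2t : 2 ∣ t := dvd_trans ⟨2, rfl⟩ h4t
  have hsq : ¬ IsSquare a := by
    rintro ⟨r, rfl⟩
    exact pow_ne_of_irreducible_X_pow_sub_C H h2t (by norm_num) r (by ring)
  have ha0 : a ≠ 0 := by
    intro h
    exact pow_ne_of_irreducible_X_pow_sub_C H h2t (by norm_num) 0 (by simp [h])
  -- card Fˣ = q - 1
  have hcu : Nat.card Fˣ = q - 1 := by
    rw [Nat.card_eq_fintype_card, Fintype.card_units, hq]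
  rcases Nat.even_or_odd (q - 1) with heven | hodd
  · -- q ≡ 3 mod 4
    obtain ⟨m, hm⟩ := heven
    have h3 : q % 4 = 3 := by omega
    have hns1 : ¬ IsSquare (-1 : F) := by
      rw [FiniteField.isSquare_neg_one_iff]; simp [← hq, h3]
    have hchi : ∀ y : F, quadraticChar F y = -1 ↔ ¬ IsSquare y := fun y =>
      quadraticChar_neg_one_iff_not_isSquare
    have hca : quadraticChar F a = -1 := (hchi a).mpr hsq
    have hc1 : quadraticChar F (-1 : F) = -1 := (hchi _).mpr hns1
    have hsqna : IsSquare (-a) := by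
      have : quadraticChar F (-a) = 1 := by
        rw [show (-a) = (-1) * a by ring, map_mul, hca, hc1]; ring
      exact (quadraticChar_one_iff_isSquare (neg_ne_zero.mpr ha0)).mp this
    obtain ⟨x, hx⟩ := hsqna
    have hx0 : x ≠ 0 := by rintro rfl; rw [mul_zero] at hx; exact ha0 (neg_eq_zero.mp hx)
    -- get z with a = -((z*z)*(z*z))
    obtain ⟨z, hz⟩ : ∃ z : F, a = -((z * z) * (z * z)) := by
      rcases em (IsSquare x) with ⟨y, hy⟩ | hnsx
      · rw [hy] at hx
        exact ⟨y, by linear_combination -hx⟩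
      · have hchim : quadraticChar F (-x) = 1 := by
          rw [show (-x) = (-1) * x by ring, map_mul, hc1, (hchi _).mpr hnsx]; ring
        obtain ⟨y, hy⟩ := (quadraticChar_one_iff_isSquare (neg_ne_zero.mpr hx0)).mp hchim
        have hx' : x = -(y*y) := by linear_combination -hy
        rw [hx'] at hx
        exact ⟨y, by linear_combination -hx⟩
    have h2ne : (2 : F) ≠ 0 := by
      intro h2
      have : (-1 : F) = 1 := by linear_combination -h2
      exact hns1 (by rw [this]; exact IsSquare.one)
    -- one of 2, -2 is a square
    obtain ⟨w, hw⟩ : ∃ w : F, w * w = 2 ∨ w * w = -2 := by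
      rcases em (IsSquare (2 : F)) with ⟨w, hw⟩ | hns2
      · exact ⟨w, Or.inl hw.symm⟩
      · have : quadraticChar F (-2 : F) = 1 := by
          rw [show (-2 : F) = (-1) * 2 by ring, map_mul, hc1, (hchi _).mpr hns2]; ring
        obtain ⟨w, hw⟩ := (quadraticChar_one_iff_isSquare
          (by simpa using h2ne)).mp this
        exact ⟨w, Or.inr hw.symm⟩
    -- choose e
    obtain ⟨e, he1, he2⟩ : ∃ e : F, e * e = (z*z)*(z*z) ∧ 2*e = (w*z)*(w*z) := by
      rcases hw with hw | hw
      · exact ⟨z*z, by ring, by linear_combination -(z*z) * hw⟩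
      · exact ⟨-(z*z), by ring, by linear_combination -(z*z) * hw⟩
    obtain ⟨u, rfl⟩ := h4t
    have hu0 : u ≠ 0 := by rintro rfl; omega
    -- factorization
    have hfac : X ^ (4 * u) - C a =
        (X ^ (2*u) + C (w*z) * X ^ u + C e) * (X ^ (2*u) - C (w*z) * X ^ u + C e) := by
      have h1 : (X : F[X]) ^ (2*u) = (X ^ u) ^ 2 := by rw [← pow_mul, mul_comm]
      have h2 : (X : F[X]) ^ (4*u) = (X ^ u) ^ 4 := by rw [← pow_mul, mul_comm]
      have hA := congrArg C he1
      have hB := congrArg C he2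
      simp only [map_mul, map_ofNat] at hA hB
      rw [h1, h2, hz, map_neg, map_mul, map_mul]
      simp only [map_mul]
      linear_combination (-1 : F[X]) * hA - (X ^ u) ^ 2 * hB
    have hnu : ∀ (c1 c0 : F), ¬ IsUnit (X ^ (2*u) + (C c1 * X ^ u + C c0)) := by
      intro c1 c0 hunit
      have hdlt : degree (C c1 * X ^ u + C c0) < degree ((X : F[X]) ^ (2*u)) := by
        rw [degree_X_pow]
        apply lt_of_le_of_lt (degree_add_le _ _)
        rw [max_lt_iff]
        constructor
        · exact lt_of_le_of_lt (degree_C_mul_X_pow_le u c1)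
            (by exact_mod_cast WithBot.coe_lt_coe.mpr (by omega))
        · exact lt_of_le_of_lt degree_C_le
            (by exact_mod_cast WithBot.coe_lt_coe.mpr (by positivity))
      have hdeg : degree (X ^ (2*u) + (C c1 * X ^ u + C c0)) = ((2*u : ℕ) : WithBot ℕ) := by
        rw [degree_add_eq_left_of_degree_lt hdlt, degree_X_pow]
      rw [Polynomial.isUnit_iff_degree_eq_zero, hdeg] at hunit
      have : 2 * u = 0 := by exact_mod_cast hunit
      omega
    rcases H.isUnit_or_isUnit hfac with hu1 | hu1
    · exact hnu (w*z) e (by rw [← add_assoc]; exact hu1)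
    · refine hnu (-(w*z)) e ?_
      have heq : X ^ (2*u) - C (w*z) * X ^ u + C e
          = X ^ (2*u) + (C (-(w*z)) * X ^ u + C e) := by
        rw [map_neg]; ring
      rw [← heq]; exact hu1
  · -- q - 1 odd : squaring is surjective on units
    have hcop : (Nat.card Fˣ).Coprime 2 := by
      rw [hcu]
      exact Nat.coprime_two_right.mpr hodd
    obtain ⟨u, hu⟩ := (powCoprime hcop).surjective (Units.mk0 a ha0)
    exact pow_ne_of_irreducible_X_pow_sub_C H h2t (by norm_num) (u : F)
      (by have := congr_arg (Units.val) hu; simpa using this)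

lemma rad_dvd (t : ℕ) : rad t ∣ t := Nat.prod_primeFactors_dvd t

lemma rad_ne_zero {t : ℕ} : rad t ≠ 0 :=
  Finset.prod_ne_zero_iff.mpr fun p hp => (Nat.prime_of_mem_primeFactors hp).ne_zero

lemma dvd_rad_pow (t : ℕ) (ht : t ≠ 0) : t ∣ rad t ^ t := by
  rw [← Nat.factorization_le_iff_dvd ht (pow_ne_zero _ rad_ne_zero), Nat.factorization_pow]
  intro p
  rcases Nat.eq_zero_or_pos (t.factorization p) with h0 | hpos
  · simp [h0]
  · have hpmem : p ∈ t.primeFactors := Nat.support_factorization t ▸ Finsupp.mem_support_iff.mpr hpos.ne'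
    have hp := Nat.prime_of_mem_primeFactors hpmem
    have hpr : p ∣ rad t := Finset.dvd_prod_of_mem _ hpmem
    have h1 : 1 ≤ (rad t).factorization p :=
      (Nat.Prime.factorization_pos_of_dvd hp rad_ne_zero hpr)
    have h2 : t.factorization p ≤ t := le_of_lt (Nat.factorization_lt p ht)
    calc t.factorization p ≤ t * 1 := by omega
    _ ≤ t * (rad t).factorization p := Nat.mul_le_mul_left t h1
    _ = (t • (rad t).factorization) p := by simp [mul_comm]

lemma coprime_rad {t k : ℕ} (ht : t ≠ 0) : (rad t).Coprime k ↔ t.Coprime k :=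
  ⟨fun h => Nat.Coprime.coprime_dvd_left (dvd_rad_pow t ht) (h.pow_left t),
   fun h => Nat.Coprime.coprime_dvd_left (rad_dvd t) h⟩

lemma count_mul (r : ℕ) (c : ℕ) :
    ((range (c * r)).filter (fun k => r.Coprime k)).card = c * r.totient := by
  induction c with
  | zero => simp
  | succ c ih =>
    have hsplit : range ((c + 1) * r) = range (c * r) ∪ Ico (c * r) (c * r + r) := by
      rw [range_eq_Ico, range_eq_Ico,
        Finset.Ico_union_Ico_eq_Ico (Nat.zero_le _) (Nat.le_add_right _ _)]
      congr 1
      ring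
    rw [hsplit, filter_union, card_union_of_disjoint, ih,
      Nat.filter_coprime_Ico_eq_totient r (c * r)]
    · ring
    · exact Finset.disjoint_filter_filter
        (by rw [range_eq_Ico]; exact Finset.Ico_disjoint_Ico_consecutive 0 (c*r) (c*r+r))

theorem aux_iff {F : Type} [Field F] [Fintype F] {t : ℕ} (ht : 2 ≤ t) (a : F) :
    Irreducible (X ^ t - C a) ↔
      ((∀ p : ℕ, p.Prime → p ∣ t → ∀ b : F, b ^ p ≠ a) ∧
        (4 ∣ t → 4 ∣ Fintype.card F - 1)) := by
  constructor
  · intro H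
    exact ⟨fun p hp hpt b => pow_ne_of_irreducible_X_pow_sub_C H hpt hp.ne_one b,
      aux_fact ht H⟩
  · rintro ⟨h1, h2⟩
    apply aux_irred (by omega) h1
    intro h4t
    have h4q := h2 h4t
    have hq2 : 2 ≤ Fintype.card F := Fintype.one_lt_card
    have hmod : Fintype.card F % 4 ≠ 3 := by omega
    obtain ⟨i, hi⟩ := FiniteField.isSquare_neg_one_iff.mpr hmod
    exact ⟨i, hi.symm⟩

theorem Nt_eq (q t : ℕ) (hq : IsPrimePow q) (ht : 2 ≤ t) :
    (Nt t q : ℚ) =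
      if rad4 t ∣ q - 1 then (Nat.totient t : ℚ) / t * ((q : ℚ) - 1) else 0 := by
  classical
  haveI hfact : Fact q.minFac.Prime := ⟨Nat.minFac_prime hq.ne_one⟩
  set F := GaloisField q.minFac (q.factorization q.minFac) with hF
  letI : Fintype F := Fintype.ofFinite F
  have hk0 : q.factorization q.minFac ≠ 0 := by
    intro h
    have h1 := hq.minFac_pow_factorization_eq
    rw [h, pow_zero] at h1
    exact hq.ne_one h1.symm
  have hcard : Fintype.card F = q := by
    rw [← Nat.card_eq_fintype_card, GaloisField.card _ _ hk0,
      hq.minFac_pow_factorization_eq]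
  have hq2 : 2 ≤ q := hq.two_le
  have ht0 : t ≠ 0 := by omega
  set n := q - 1 with hn
  have hn1 : 1 ≤ n := by omega
  have hNt : Nt t q = (univ.filter (fun a : F => Irreducible (X ^ t - C a))).card := by
    rw [Nt, dif_pos hq, Nat.card_eq_fintype_card, Fintype.card_subtype]
  have hcrit : ∀ a : F, Irreducible (X ^ t - C a) ↔
      ((∀ p : ℕ, p.Prime → p ∣ t → ∀ b : F, b ^ p ≠ a) ∧ (4 ∣ t → 4 ∣ n)) := by
    intro a
    rw [aux_iff ht a, hcard]
  have h2rad : ∀ p ∈ t.primeFactors, p ∣ rad t := fun p hp => Finset.dvd_prod_of_mem _ hp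
  by_cases hr4 : rad4 t ∣ n
  · rw [if_pos hr4]
    have hradt : rad t ∣ n := by
      by_cases h4 : 4 ∣ t
      · rw [rad4, if_pos h4] at hr4
        exact (dvd_mul_left _ 2).trans hr4
      · rwa [rad4, if_neg h4] at hr4
    have h4n : 4 ∣ t → 4 ∣ n := by
      intro h4
      rw [rad4, if_pos h4] at hr4
      have h2r : 2 ∣ rad t := h2rad 2
        (Nat.mem_primeFactors.mpr ⟨Nat.prime_two, dvd_trans ⟨2, rfl⟩ h4, ht0⟩)
      obtain ⟨s, hs⟩ := h2r
      exact dvd_trans ⟨s, by omega⟩ hr4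
    obtain ⟨g, hg⟩ := IsCyclic.exists_generator (α := Fˣ)
    have horder : orderOf g = n := by
      rw [orderOf_eq_card_of_forall_mem_zpowers hg, Nat.card_eq_fintype_card,
        Fintype.card_units, hcard]
    have hpdvdn : ∀ p : ℕ, p.Prime → p ∣ t → p ∣ n := fun p hp hpt =>
      ((h2rad p (Nat.mem_primeFactors.mpr ⟨hp, hpt, ht0⟩)).trans hradt)
    have hcount : ((range n).filter (fun k => (rad t).Coprime k)).card
        = (univ.filter (fun a : F => Irreducible (X ^ t - C a))).card := by
      apply Finset.card_nbij (i := fun k => ((g ^ k : Fˣ) : F))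
      · intro k hk
        simp only [mem_coe, mem_filter, mem_range] at hk
        obtain ⟨hkn, hkcop⟩ := hk
        simp only [mem_coe, mem_filter, mem_univ, true_and]
        rw [hcrit]
        refine ⟨?_, h4n⟩
        intro p hp hpt b hb
        have hbne : b ≠ 0 := by
          intro h
          rw [h, zero_pow hp.ne_zero] at hb
          exact Units.ne_zero _ hb.symm
        have hu : (Units.mk0 b hbne) ^ p = g ^ k := by
          apply Units.ext
          rw [Units.val_pow_eq_pow_val]
          exact hb
        obtain ⟨j, hj⟩ := hg (Units.mk0 b hbne)
        have hj' : g ^ j = Units.mk0 b hbne := hj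
        have hone : g ^ ((j * p : ℤ) - (k : ℤ)) = 1 := by
          rw [zpow_sub, zpow_natCast]
          rw [zpow_mul, zpow_natCast, hj', hu]
          simp
        have hdvd : ((n : ℤ)) ∣ (j * p - k) := by
          rw [← horder]
          exact orderOf_dvd_iff_zpow_eq_one.mpr hone
        have hpk : (p : ℤ) ∣ (k : ℤ) := by
          have hpn : (p : ℤ) ∣ (n : ℤ) := Int.natCast_dvd_natCast.mpr (hpdvdn p hp hpt)
          have h1 : (p : ℤ) ∣ (j * p - k) := hpn.trans hdvd
          have h2 : (p : ℤ) ∣ j * p := dvd_mul_left _ _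
          have h3 := dvd_sub h2 h1
          simpa using h3
        have hpk' : p ∣ k := Int.natCast_dvd_natCast.mp hpk
        have hpr : p ∣ rad t := h2rad p (Nat.mem_primeFactors.mpr ⟨hp, hpt, ht0⟩)
        have : p ∣ 1 := hkcop ▸ Nat.dvd_gcd hpr hpk'
        exact absurd (Nat.dvd_one.mp this) hp.ne_one
      · intro k1 hk1 k2 hk2 he
        simp only [mem_coe, mem_filter, mem_range] at hk1 hk2
        have huu : g ^ k1 = g ^ k2 := Units.ext he
        rw [pow_eq_pow_iff_modEq, horder] at huu
        have e1 := Nat.mod_eq_of_lt hk1.1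
        have e2 := Nat.mod_eq_of_lt hk2.1
        unfold Nat.ModEq at huu
        omega
      · intro a ha
        simp only [mem_coe, mem_filter, mem_univ, true_and] at ha
        rw [hcrit] at ha
        obtain ⟨h1, _⟩ := ha
        have hminFac : t.minFac.Prime := Nat.minFac_prime (by omega)
        have ha0 : a ≠ 0 := fun h =>
          h1 t.minFac hminFac t.minFac_dvd 0 (by rw [zero_pow hminFac.ne_zero, h]) 
        obtain ⟨k', hk'⟩ := mem_powers_iff_mem_zpowers.mpr (hg (Units.mk0 a ha0))
        have hk'' : g ^ k' = Units.mk0 a ha0 := hk'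
        have hgk : ((g ^ (k' % n) : Fˣ) : F) = a := by
          rw [show k' % n = k' % orderOf g by rw [horder], pow_mod_orderOf, hk'']
          rfl
        refine ⟨k' % n, ?_, hgk⟩
        simp only [coe_filter, mem_range, Set.mem_setOf_eq]
        refine ⟨Nat.mod_lt _ (by omega), ?_⟩
        rw [coprime_rad ht0]
        by_contra hnc
        obtain ⟨p, hp, hpdvd⟩ := Nat.exists_prime_and_dvd hnc
        have hpt : p ∣ t := hpdvd.trans (Nat.gcd_dvd_left _ _)
        have hpk : p ∣ k' % n := hpdvd.trans (Nat.gcd_dvd_right _ _)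
        apply h1 p hp hpt ((g ^ ((k' % n) / p) : Fˣ) : F)
        rw [← Units.val_pow_eq_pow_val, ← pow_mul, Nat.div_mul_cancel hpk, hgk]
    rw [hNt, ← hcount]
    obtain ⟨c, hc⟩ := hradt
    rw [hc, mul_comm (rad t) c, count_mul]
    -- now rational arithmetic
    have hQn : ((q : ℚ) - 1) = ((n : ℚ)) := by
      rw [hn]
      push_cast [Nat.cast_sub (by omega : 1 ≤ q)]
      ring
    rw [hQn, hc]
    have hpf : (rad t).primeFactors = t.primeFactors :=
      Nat.primeFactors_prod (fun p hp => Nat.prime_of_mem_primeFactors hp)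
    have h1 : (rad t).totient * rad t = rad t * ∏ p ∈ t.primeFactors, (p - 1) := by
      have := Nat.totient_mul_prod_primeFactors (rad t)
      rwa [hpf, ← rad] at this
    have h2 : t.totient * rad t = t * ∏ p ∈ t.primeFactors, (p - 1) := by
      have := Nat.totient_mul_prod_primeFactors t
      rwa [← rad] at this
    have hrpos : 0 < rad t := Nat.pos_of_ne_zero rad_ne_zero
    have htot : (rad t).totient * t = t.totient * rad t := by
      have h3 : (rad t).totient = ∏ p ∈ t.primeFactors, (p - 1) :=
        Nat.eq_of_mul_eq_mul_right hrpos (by rw [h1, mul_comm (rad t) _])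
      rw [h3, h2]
      ring
    have htQ : (t : ℚ) ≠ 0 := Nat.cast_ne_zero.mpr ht0
    have hQ : ((rad t).totient : ℚ) * t = t.totient * rad t := by exact_mod_cast htot
    push_cast
    field_simp
    ring_nf
    ring_nf at hQ
    nlinarith [hQ]
  · rw [if_neg hr4]
    rw [hNt]
    norm_cast
    rw [Finset.card_eq_zero, Finset.filter_eq_empty_iff]
    intro a _
    rw [hcrit]
    rintro ⟨h1, h2⟩
    by_cases hradt : rad t ∣ n
    · have h4t : 4 ∣ t := by
        by_contra h4
        rw [rad4, if_neg h4] at hr4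
        exact hr4 hradt
      rw [rad4, if_pos h4t] at hr4
      apply hr4
      have h2mem : (2 : ℕ) ∈ t.primeFactors :=
        Nat.mem_primeFactors.mpr ⟨Nat.prime_two, dvd_trans ⟨2, rfl⟩ h4t, ht0⟩
      have hs : 2 * ∏ p ∈ t.primeFactors.erase 2, p = rad t :=
        Finset.mul_prod_erase t.primeFactors (fun p => p) h2mem
      set s := ∏ p ∈ t.primeFactors.erase 2, p with hsdef
      have hsodd : ¬ 2 ∣ s := by
        intro h2s
        obtain ⟨p, hpmem, hp2⟩ := (Nat.prime_two.prime.dvd_finset_prod_iff _).mp h2s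
        have hpp := Nat.prime_of_mem_primeFactors (Finset.mem_of_mem_erase hpmem)
        have : p = 2 := ((Nat.prime_dvd_prime_iff_eq Nat.prime_two hpp).mp hp2).symm
        exact (Finset.ne_of_mem_erase hpmem) this
      have h4n : 4 ∣ n := h2 h4t
      obtain ⟨c, hc⟩ := hradt
      rw [← hs] at hc
      have h2c : 2 ∣ s * c := by
        have he : 2 * (s * c) = n := by rw [hc]; ring
        have h4' : 4 ∣ 2 * (s * c) := by rw [he]; exact h4n
        omega
      have hco : Nat.Coprime 2 s := Nat.prime_two.coprime_iff_not_dvd.mpr hsodd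
      have h2c' : 2 ∣ c := hco.dvd_of_dvd_mul_left h2c
      obtain ⟨c', hc'⟩ := h2c'
      exact ⟨c', by rw [hc, hc', ← hs]; ring⟩
    · have hex : ∃ p ∈ t.primeFactors, ¬ (p ∣ n) := by
        by_contra hall
        push_neg at hall
        exact hradt (Finset.prod_primes_dvd n
          (fun p hp => (Nat.prime_of_mem_primeFactors hp).prime) hall)
      obtain ⟨p, hpmem, hpn⟩ := hex
      have hp := Nat.prime_of_mem_primeFactors hpmem
      have hpt : p ∣ t := Nat.dvd_of_mem_primeFactors hpmem
      rcases eq_or_ne a 0 with rfl | ha0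
      · exact h1 p hp hpt 0 (by rw [zero_pow hp.ne_zero])
      · have hcop : (Nat.card Fˣ).Coprime p := by
          rw [Nat.card_eq_fintype_card, Fintype.card_units, hcard]
          exact Nat.coprime_comm.mp (hp.coprime_iff_not_dvd.mpr hpn)
        obtain ⟨u, hu⟩ := (powCoprime hcop).surjective (Units.mk0 a ha0)
        apply h1 p hp hpt (u : F)
        have := congrArg Units.val hu
        rw [← Units.val_pow_eq_pow_val]
        exact this
end

section
/- Let q be a prime power and t ≥ 2 an integer with rad(t) dividing q−1 and such that 4 ∣ t implies q ≡ 1 (mod 4). Writing q−1 = R·S where R is the largest divisor of q−1 coprime to rad(t), the number of elements a of F_q* whose multiplicative order e satisfies rad(t) ∣ e and gcd(t, (q−1)/e) = 1 equals φ(S)·R = (φ(t)/t)·(q−1). -/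
open Polynomial

lemma cop_trans {x m n : ℕ} (h : ∀ p : ℕ, p.Prime → p ∣ n → p ∣ m)
    (hx : Nat.Coprime x m) : Nat.Coprime x n := by
  by_contra hc
  obtain ⟨p, pp, hpd⟩ := Nat.exists_prime_and_dvd hc
  have h1 : p ∣ x := hpd.trans (Nat.gcd_dvd_left _ _)
  have h2 : p ∣ n := hpd.trans (Nat.gcd_dvd_right _ _)
  have : p ∣ Nat.gcd x m := Nat.dvd_gcd h1 (h p pp h2)
  rw [hx] at this
  exact pp.one_lt.ne' (Nat.eq_one_of_dvd_one this)

theorem count_orders_eq (F : Type*) [Field F] [Fintype F] (t R S : ℕ) (ht : 2 ≤ t)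
    (hrad : rad t ∣ Fintype.card F - 1)
    (h4 : 4 ∣ t → Fintype.card F ≡ 1 [MOD 4])
    (hRS : R * S = Fintype.card F - 1)
    (hRdvd : R ∣ Fintype.card F - 1)
    (hRcop : Nat.Coprime R (rad t))
    (hRmax : ∀ d : ℕ, d ∣ Fintype.card F - 1 → Nat.Coprime d (rad t) → d ≤ R) :
    Nat.card {a : Fˣ // rad t ∣ orderOf a ∧
        Nat.gcd t ((Fintype.card F - 1) / orderOf a) = 1} = Nat.totient S * R ∧
      ((Nat.totient S * R : ℕ) : ℚ) =
        (Nat.totient t : ℚ) / t * ((Fintype.card F : ℚ) - 1) := by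
  classical
  set n := Fintype.card F - 1 with hn_def
  have ht0 : t ≠ 0 := by omega
  have hcardF : 2 ≤ Fintype.card F := Fintype.one_lt_card
  have hn0 : n ≠ 0 := by omega
  have hR0 : R ≠ 0 := by rintro rfl; simp [← hRS] at hn0
  have hS0 : S ≠ 0 := by rintro rfl; simp [← hRS] at hn0
  have hcard : Fintype.card Fˣ = n := by
    rw [Fintype.card_units]
  -- primes of t divide rad t and t
  have hprt : ∀ p : ℕ, p.Prime → p ∣ t → p ∣ rad t := fun p pp hpt =>
    Finset.dvd_prod_of_mem _ (Nat.mem_primeFactors.mpr ⟨pp, hpt, ht0⟩)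
  have hradt : rad t ∣ t := Nat.prod_primeFactors_dvd t
  -- every prime of t divides S
  have hpS : ∀ p : ℕ, p.Prime → p ∣ t → p ∣ S := by
    intro p pp hpt
    have hpn : p ∣ R * S := by rw [hRS]; exact (hprt p pp hpt).trans hrad
    rcases (Nat.Prime.dvd_mul pp).mp hpn with h | h
    · exact absurd (Nat.eq_one_of_dvd_one (hRcop ▸ Nat.dvd_gcd h (hprt p pp hpt)))
        pp.one_lt.ne'
    · exact h
  -- every prime of S divides t
  have hpS' : ∀ p : ℕ, p.Prime → p ∣ S → p ∣ t := by
    intro p pp hpS2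
    by_contra hpt
    have hdvd : R * p ∣ n := by
      rw [← hRS]; exact Nat.mul_dvd_mul_left R hpS2
    have hcop : Nat.Coprime (R * p) (rad t) :=
      Nat.Coprime.mul hRcop ((pp.coprime_iff_not_dvd).mpr
        (fun h => hpt (h.trans hradt)))
    have := hRmax (R * p) hdvd hcop
    nlinarith [pp.two_le, Nat.pos_of_ne_zero hR0]
  -- coprimality facts
  have hcopRS : Nat.Coprime R S := cop_trans
    (fun p pp hps => hprt p pp (hpS' p pp hps)) hRcop
  have hcopRt : Nat.Coprime R t := cop_trans (fun p pp hpt => hprt p pp hpt) hRcop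
  have hradS : rad t ∣ S :=
    Finset.prod_primes_dvd S (fun p hp => (Nat.prime_of_mem_primeFactors hp).prime)
      (fun p hp => hpS p (Nat.prime_of_mem_primeFactors hp)
        (Nat.dvd_of_mem_primeFactors hp))
  -- the key equivalence
  have key : ∀ e : ℕ, e ∣ n → ((rad t ∣ e ∧ Nat.gcd t (n / e) = 1) ↔ S ∣ e) := by
    intro e he
    have he0 : e ≠ 0 := fun h => hn0 (by simpa [h] using he)
    have hmul : e * (n / e) = n := Nat.mul_div_cancel' he
    have hq0 : n / e ≠ 0 := fun h => hn0 (by rw [← hmul, h, mul_zero])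
    constructor
    · rintro ⟨-, hg⟩
      rw [← Nat.factorization_le_iff_dvd hS0 he0]
      intro p
      rcases Nat.eq_zero_or_pos (S.factorization p) with h0 | hpos
      · simp [h0]
      have pp : p.Prime := Nat.prime_of_mem_primeFactors
        (Nat.support_factorization S ▸ Finsupp.mem_support_iff.mpr hpos.ne')
      have hpt : p ∣ t := hpS' p pp (Nat.dvd_of_factorization_pos hpos.ne')
      have hpq : ¬ p ∣ (n / e) := by
        intro h
        exact pp.one_lt.ne' (Nat.eq_one_of_dvd_one (hg ▸ Nat.dvd_gcd hpt h))
      have hq_zero : (n / e).factorization p = 0 :=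
        Nat.factorization_eq_zero_of_not_dvd hpq
      have hSn : S.factorization p ≤ n.factorization p :=
        (Nat.factorization_le_iff_dvd hS0 hn0).mpr ⟨R, by rw [← hRS, mul_comm]⟩ p
      have hnf : n.factorization = e.factorization + (n / e).factorization := by
        rw [← Nat.factorization_mul he0 hq0, hmul]
      have : n.factorization p = e.factorization p + (n / e).factorization p := by
        rw [hnf, Finsupp.add_apply]
      omega
    · rintro ⟨k, rfl⟩
      refine ⟨hradS.trans ⟨k, rfl⟩, ?_⟩
      have hqR : n / (S * k) ∣ R := by
        obtain ⟨m, hm⟩ := he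
        have heq : n / (S * k) = m := by rw [hm, Nat.mul_div_cancel_left _ (Nat.pos_of_ne_zero he0)]
        rw [heq]
        have h2 : S * R = S * (k * m) := by rw [mul_comm S R, hRS, hm]; ring
        have hR_eq : R = k * m := Nat.eq_of_mul_eq_mul_left (Nat.pos_of_ne_zero hS0) h2
        exact hR_eq ▸ Dvd.intro_left k rfl
      exact (Nat.Coprime.coprime_dvd_left hqR hcopRt).symm
  -- rewrite the subtype condition
  have hsub : ∀ a : Fˣ, (rad t ∣ orderOf a ∧ Nat.gcd t (n / orderOf a) = 1) ↔
      S ∣ orderOf a := fun a => key _ (hcard ▸ orderOf_dvd_card)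
  have hcount : Nat.card {a : Fˣ // rad t ∣ orderOf a ∧
      Nat.gcd t (n / orderOf a) = 1} = Nat.totient S * R := by
    classical
    rw [Nat.card_eq_fintype_card, Fintype.card_subtype]
    have hfilter : (Finset.univ.filter fun a : Fˣ =>
        rad t ∣ orderOf a ∧ Nat.gcd t (n / orderOf a) = 1) =
        Finset.univ.filter fun a : Fˣ => S ∣ orderOf a := by
      apply Finset.filter_congr; intro a _; simpa using hsub a
    rw [hfilter]
    have hfib : (Finset.univ.filter fun a : Fˣ => S ∣ orderOf a).card =
        ∑ e ∈ n.divisors.filter (S ∣ ·),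
          ((Finset.univ.filter fun a : Fˣ => S ∣ orderOf a).filter
            fun a => orderOf a = e).card := by
      apply Finset.card_eq_sum_card_fiberwise
      intro a ha
      simp only [Finset.mem_coe, Finset.mem_filter, Finset.mem_univ, true_and] at ha ⊢
      exact ⟨Nat.mem_divisors.mpr ⟨hcard ▸ orderOf_dvd_card, hn0⟩, ha⟩
    rw [hfib]
    have hstep : ∀ e ∈ n.divisors.filter (S ∣ ·),
        ((Finset.univ.filter fun a : Fˣ => S ∣ orderOf a).filter
            fun a => orderOf a = e).card = Nat.totient e := by
      intro e he
      simp only [Finset.mem_filter, Nat.mem_divisors] at he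
      have : ((Finset.univ.filter fun a : Fˣ => S ∣ orderOf a).filter
          fun a => orderOf a = e) = Finset.univ.filter fun a : Fˣ => orderOf a = e := by
        ext a
        simp only [Finset.mem_filter, Finset.mem_univ, true_and]
        constructor
        · rintro ⟨-, h⟩; exact h
        · rintro h; exact ⟨h ▸ he.2, h⟩
      rw [this]
      exact IsCyclic.card_orderOf_eq_totient (hcard ▸ he.1.1 : e ∣ Fintype.card Fˣ)
    rw [Finset.sum_congr rfl hstep]
    -- reindex: e = S * d, d ∈ R.divisors
    have hre : ∑ e ∈ n.divisors.filter (S ∣ ·), Nat.totient e =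
        ∑ d ∈ R.divisors, Nat.totient (S * d) := by
      apply Finset.sum_nbij' (fun e => e / S) (fun d => S * d)
      · intro e he
        simp only [Finset.mem_filter, Nat.mem_divisors] at he
        obtain ⟨⟨hen, -⟩, k, rfl⟩ := he
        rw [Nat.mul_div_cancel_left _ (Nat.pos_of_ne_zero hS0)]
        refine Nat.mem_divisors.mpr ⟨?_, hR0⟩
        have : S * k ∣ S * R := by rw [mul_comm S R, hRS]; exact hen
        exact (Nat.mul_dvd_mul_iff_left (Nat.pos_of_ne_zero hS0)).mp this
      · intro d hd
        simp only [Nat.mem_divisors] at hd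
        refine Finset.mem_filter.mpr ⟨Nat.mem_divisors.mpr ⟨?_, hn0⟩, Dvd.intro d rfl⟩
        rw [← hRS, mul_comm R S]; exact Nat.mul_dvd_mul_left S hd.1
      · intro e he
        simp only [Finset.mem_filter, Nat.mem_divisors] at he
        exact Nat.mul_div_cancel' he.2
      · intro d hd
        rw [Nat.mul_div_cancel_left _ (Nat.pos_of_ne_zero hS0)]
      · intro e he
        simp only [Finset.mem_filter, Nat.mem_divisors] at he
        rw [Nat.mul_div_cancel' he.2]
    rw [hre]
    have htotmul : ∀ d ∈ R.divisors, Nat.totient (S * d) =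
        Nat.totient S * Nat.totient d := by
      intro d hd
      exact Nat.totient_mul (Nat.Coprime.coprime_dvd_right
        (Nat.mem_divisors.mp hd).1 hcopRS.symm)
    rw [Finset.sum_congr rfl htotmul, ← Finset.mul_sum, Nat.sum_totient]
  refine ⟨hcount, ?_⟩
  -- second part: totient ratio
  have hpf : S.primeFactors = t.primeFactors := by
    ext p
    simp only [Nat.mem_primeFactors]
    constructor
    · rintro ⟨pp, hps, -⟩; exact ⟨pp, hpS' p pp hps, ht0⟩
    · rintro ⟨pp, hpt, -⟩; exact ⟨pp, hpS p pp hpt, hS0⟩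
  have hA0 : (∏ p ∈ t.primeFactors, p) ≠ 0 :=
    Finset.prod_ne_zero_iff.mpr fun p hp => (Nat.prime_of_mem_primeFactors hp).pos.ne'
  have hkey : Nat.totient S * t = Nat.totient t * S := by
    have h1 := Nat.totient_mul_prod_primeFactors S
    have h2 := Nat.totient_mul_prod_primeFactors t
    rw [hpf] at h1
    have : (Nat.totient S * t) * (∏ p ∈ t.primeFactors, p) =
        (Nat.totient t * S) * (∏ p ∈ t.primeFactors, p) := by
      calc (Nat.totient S * t) * (∏ p ∈ t.primeFactors, p)
          = t * (Nat.totient S * ∏ p ∈ t.primeFactors, p) := by ring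
        _ = t * (S * ∏ p ∈ t.primeFactors, (p - 1)) := by rw [h1]
        _ = S * (t * ∏ p ∈ t.primeFactors, (p - 1)) := by ring
        _ = S * (Nat.totient t * ∏ p ∈ t.primeFactors, p) := by rw [h2]
        _ = (Nat.totient t * S) * (∏ p ∈ t.primeFactors, p) := by ring
    exact Nat.eq_of_mul_eq_mul_right (Nat.pos_of_ne_zero hA0) this
  have hcast : ((Fintype.card F : ℚ) - 1) = ((R * S : ℕ) : ℚ) := by
    rw [hRS, hn_def, Nat.cast_sub (by omega : 1 ≤ Fintype.card F)]
    norm_num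
  rw [hcast]
  have ht0' : (t : ℚ) ≠ 0 := Nat.cast_ne_zero.mpr ht0
  rw [div_mul_eq_mul_div, eq_div_iff ht0']
  push_cast
  have : (Nat.totient S : ℚ) * t = (Nat.totient t : ℚ) * S := by exact_mod_cast hkey
  nlinarith [this]
end
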